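/- arXiv:1002.2856 — 2 statements merged into one kernel-verified Lean document; each statement's English description precedes it below -/
import Mathlib

section
/- For a measurable function v on a bounded set Ω, the decreasing rearrangement of the negative part satisfies (v⁻)*(s) = (v*)⁻(|Ω| − s) for almost every s ∈ (0, |Ω|). -/
open MeasureTheory Set Metric Filter

/-- The distribution function `μ(t) = |{x ∈ Ω : u(x) > t}|`. -/
noncomputable def distrib {n : ℕ} (Ω : Set (EuclideanSpace ℝ (Fin n)))
    (u : EuclideanSpace ℝ (Fin n) → ℝ) (t : ℝ) : ℝ :=
  (volume {x ∈ Ω | t < u x}).toReal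

/-- The decreasing rearrangement `u*(s) = inf {t : μ(t) ≤ s}`. -/
noncomputable def rearr {n : ℕ} (Ω : Set (EuclideanSpace ℝ (Fin n)))
    (u : EuclideanSpace ℝ (Fin n) → ℝ) (s : ℝ) : ℝ :=
  sInf {t : ℝ | distrib Ω u t ≤ s}

lemma rearr_negPart_pt {n : ℕ} (Ω : Set (EuclideanSpace ℝ (Fin n)))
    (v : EuclideanSpace ℝ (Fin n) → ℝ)
    (hΩmeas : MeasurableSet Ω) (hfin : volume Ω ≠ ⊤) (hv : Measurable v)
    (s : ℝ) (hs0 : 0 < s) (hsM : s < (volume Ω).toReal)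
    (hC : ∀ q : ℚ, distrib Ω v (q : ℝ) ≠ (volume Ω).toReal - s) :
    rearr Ω (fun x => max (-v x) 0) s = max (-(rearr Ω v ((volume Ω).toReal - s))) 0 := by
  set M : ℝ := (volume Ω).toReal with hMdef
  set σ : ℝ := M - s with hσdef
  have hσ0 : 0 < σ := by simp only [hσdef]; linarith
  have hσM : σ < M := by simp only [hσdef]; linarith
  -- measurability and finiteness
  have hmeas : ∀ t : ℝ, MeasurableSet {x ∈ Ω | t < v x} := fun t =>
    hΩmeas.inter (measurableSet_lt measurable_const hv)
  have hmeas' : ∀ t : ℝ, MeasurableSet {x ∈ Ω | t ≤ v x} := fun t =>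
    hΩmeas.inter (measurableSet_le measurable_const hv)
  have hfinA : ∀ t : ℝ, volume {x ∈ Ω | t < v x} ≠ ⊤ := fun t =>
    ((measure_mono (sep_subset _ _)).trans_lt hfin.lt_top).ne
  have hfinB : ∀ t : ℝ, volume {x ∈ Ω | t ≤ v x} ≠ ⊤ := fun t =>
    ((measure_mono (sep_subset _ _)).trans_lt hfin.lt_top).ne
  -- the distribution function of v, antitone
  have hφ_anti : Antitone (distrib Ω v) := by
    intro a b hab
    exact ENNReal.toReal_mono (hfinA a)
      (measure_mono fun x hx => ⟨hx.1, lt_of_le_of_lt hab hx.2⟩)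
  -- lower bound by the "≥" distribution: if τ < t then |{v ≥ t}| ≤ φ τ
  have hbar_le : ∀ τ t : ℝ, τ < t →
      (volume {x ∈ Ω | t ≤ v x}).toReal ≤ distrib Ω v τ := by
    intro τ t hτt
    exact ENNReal.toReal_mono (hfinA τ)
      (measure_mono fun x hx => ⟨hx.1, lt_of_lt_of_le hτt hx.2⟩)
  have hbar_ge : ∀ t : ℝ, distrib Ω v t ≤ (volume {x ∈ Ω | t ≤ v x}).toReal := by
    intro t
    exact ENNReal.toReal_mono (hfinB t) (measure_mono fun x hx => ⟨hx.1, hx.2.le⟩)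
  -- formula for the distribution function of the negative part, t ≥ 0
  have hψ : ∀ t : ℝ, 0 ≤ t →
      distrib Ω (fun x => max (-v x) 0) t = M - (volume {x ∈ Ω | -t ≤ v x}).toReal := by
    intro t ht
    have hset : {x ∈ Ω | t < max (-(v x)) 0} = Ω \ {x ∈ Ω | -t ≤ v x} := by
      ext x
      simp only [mem_sep_iff, mem_diff, lt_max_iff, not_and, not_le]
      constructor
      · rintro ⟨hx, h | h⟩
        · exact ⟨hx, fun _ => by linarith⟩
        · linarith
      · rintro ⟨hx, h⟩
        exact ⟨hx, Or.inl (by linarith [h hx])⟩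
    show (volume {x ∈ Ω | t < max (-(v x)) 0}).toReal = _
    rw [hset, measure_diff (sep_subset _ _) (hmeas' (-t)).nullMeasurableSet (hfinB (-t)),
      ENNReal.toReal_sub_of_le (measure_mono (sep_subset _ _)) hfin]
  -- distribution of negative part is M for t < 0
  have hψneg : ∀ t : ℝ, t < 0 → distrib Ω (fun x => max (-v x) 0) t = M := by
    intro t ht
    have hset : {x ∈ Ω | t < max (-(v x)) 0} = Ω := by
      ext x
      simp only [mem_sep_iff, lt_max_iff, and_iff_left_iff_imp]
      exact fun _ => Or.inr ht
    show (volume {x ∈ Ω | t < max (-(v x)) 0}).toReal = M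
    rw [hset]
  -- S is nonempty
  have hS_ne : ∃ τ : ℝ, distrib Ω v τ ≤ σ := by
    have hanti : Antitone (fun k : ℕ => {x ∈ Ω | (k : ℝ) < v x}) := by
      intro a b hab x hx
      exact ⟨hx.1, lt_of_le_of_lt (by exact_mod_cast Nat.cast_le.2 hab) hx.2⟩
    have h0 : (⋂ k : ℕ, {x ∈ Ω | (k : ℝ) < v x}) = ∅ := by
      ext x
      simp only [mem_iInter, mem_sep_iff, mem_empty_iff_false, iff_false, not_forall]
      obtain ⟨k, hk⟩ := exists_nat_gt (v x)
      exact ⟨k, fun h => absurd h.2 (not_lt.2 hk.le)⟩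
    have htd := tendsto_measure_iInter_atTop (μ := volume)
      (s := fun k : ℕ => {x ∈ Ω | (k : ℝ) < v x})
      (fun k => (hmeas (k : ℝ)).nullMeasurableSet) hanti ⟨0, hfinA _⟩
    rw [h0, measure_empty] at htd
    have hev : ∀ᶠ k : ℕ in atTop,
        volume {x ∈ Ω | (k : ℝ) < v x} < ENNReal.ofReal σ :=
      htd.eventually_lt_const (ENNReal.ofReal_pos.2 hσ0)
    obtain ⟨k, hk⟩ := hev.exists
    exact ⟨(k : ℝ), ((ENNReal.lt_ofReal_iff_toReal_lt (hfinA _)).1 hk).le⟩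
  -- exists a point where φ > σ
  have hτ0 : ∃ τ0 : ℝ, σ < distrib Ω v τ0 := by
    have hmono : Monotone (fun k : ℕ => {x ∈ Ω | -(k : ℝ) < v x}) := by
      intro a b hab x hx
      refine ⟨hx.1, lt_of_le_of_lt ?_ hx.2⟩
      have : (a : ℝ) ≤ b := by exact_mod_cast hab
      linarith
    have hU : (⋃ k : ℕ, {x ∈ Ω | -(k : ℝ) < v x}) = Ω := by
      ext x
      simp only [mem_iUnion, mem_sep_iff]
      constructor
      · rintro ⟨k, hk, _⟩; exact hk
      · intro hx
        obtain ⟨k, hk⟩ := exists_nat_gt (-(v x))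
        exact ⟨k, hx, by linarith⟩
    have htd := tendsto_measure_iUnion_atTop (μ := volume) hmono
    rw [hU] at htd
    have hlt : ENNReal.ofReal σ < volume Ω :=
      (ENNReal.ofReal_lt_iff_lt_toReal hσ0.le hfin).2 hσM
    obtain ⟨k, hk⟩ := (htd.eventually_const_lt hlt).exists
    refine ⟨-(k : ℝ), ?_⟩
    have := (ENNReal.ofReal_lt_iff_lt_toReal hσ0.le (hfinA (-(k : ℝ)))).1 hk
    exact this
  obtain ⟨τ0, hτ0⟩ := hτ0
  -- S, its inf r
  set S : Set ℝ := {t : ℝ | distrib Ω v t ≤ σ} with hSdef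
  have hS_bdd : BddBelow S := by
    refine ⟨τ0, fun τ hτ => ?_⟩
    by_contra hlt
    push_neg at hlt
    exact absurd (le_trans (hφ_anti hlt.le) hτ) (not_le.2 hτ0)
  have hS_ne' : S.Nonempty := hS_ne
  set r : ℝ := sInf S with hrdef
  have hr_eq : rearr Ω v σ = r := rfl
  set m : ℝ := max (-r) 0 with hmdef
  -- T
  set T : Set ℝ := {t : ℝ | distrib Ω (fun x => max (-v x) 0) t ≤ s} with hTdef
  have hT_nonneg : ∀ t ∈ T, 0 ≤ t := by
    intro t ht
    by_contra hneg
    push_neg at hneg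
    have := hψneg t hneg
    rw [hTdef] at ht
    simp only [mem_setOf_eq, this] at ht
    linarith
  -- Step B : every t > m lies in T
  have hB : ∀ t : ℝ, m < t → t ∈ T := by
    intro t ht
    have ht0 : 0 < t := lt_of_le_of_lt (le_max_right _ _) ht
    have htr : -t < r := by
      have : -r < t := lt_of_le_of_lt (le_max_left _ _) ht
      linarith
    have hφgt : σ < distrib Ω v (-t) := by
      by_contra hle
      push_neg at hle
      have : r ≤ -t := csInf_le hS_bdd hle
      linarith
    have key : (volume {x ∈ Ω | -t ≤ v x}).toReal ≥ distrib Ω v (-t) := hbar_ge (-t)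
    show distrib Ω (fun x => max (-v x) 0) t ≤ s
    rw [hψ t ht0.le]
    have : σ < (volume {x ∈ Ω | -t ≤ v x}).toReal := lt_of_lt_of_le hφgt key
    simp only [hσdef] at this
    linarith
  have hT_ne : T.Nonempty := ⟨m + 1, hB _ (by linarith)⟩
  have hT_bdd : BddBelow T := ⟨0, hT_nonneg⟩
  -- Step A : every t ∈ T satisfies -r ≤ t
  have hA : ∀ t ∈ T, -r ≤ t := by
    intro t ht
    have ht0 : 0 ≤ t := hT_nonneg t ht
    have hbar : σ ≤ (volume {x ∈ Ω | -t ≤ v x}).toReal := by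
      have := hψ t ht0
      rw [hTdef] at ht
      simp only [mem_setOf_eq, this] at ht
      linarith [ht]
    by_contra hlt
    push_neg at hlt
    have hrlt : r < -t := by linarith
    obtain ⟨τ, hτS, hτlt⟩ := exists_lt_of_csInf_lt hS_ne' hrlt
    -- φ τ ≤ σ and, for any τ < τ' < -t, σ ≤ φ τ' ≤ φ τ ≤ σ
    obtain ⟨q, hq1, hq2⟩ := exists_rat_btwn hτlt
    have h1 : distrib Ω v (q : ℝ) ≤ σ := le_trans (hφ_anti hq1.le) hτS
    have h2 : σ ≤ distrib Ω v (q : ℝ) :=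
      le_trans hbar (hbar_le (q : ℝ) (-t) hq2)
    exact hC q (le_antisymm h1 h2)
  -- conclude
  show sInf T = m
  refine le_antisymm ?_ (le_csInf hT_ne fun t ht => max_le (hA t ht) (hT_nonneg t ht))
  refine le_of_forall_pos_le_add fun ε hε => ?_
  exact csInf_le hT_bdd (hB (m + ε) (by linarith))

theorem rearr_negPart {n : ℕ} (Ω : Set (EuclideanSpace ℝ (Fin n)))
    (v : EuclideanSpace ℝ (Fin n) → ℝ)
    (hΩmeas : MeasurableSet Ω) (hΩbd : Bornology.IsBounded Ω)
    (hv : Measurable v) :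
    ∀ᵐ s ∂(volume.restrict (Set.Ioo (0 : ℝ) (volume Ω).toReal)),
      rearr Ω (fun x => max (-v x) 0) s
        = max (-(rearr Ω v ((volume Ω).toReal - s))) 0 := by
  have hfin : volume Ω ≠ ⊤ := hΩbd.measure_lt_top.ne
  set M : ℝ := (volume Ω).toReal with hMdef
  have hE : volume ((fun y : ℝ => M - y) ''
      ((fun a : ℝ => distrib Ω v a) '' (Set.range ((↑) : ℚ → ℝ)))) = 0 :=
    (((countable_range _).image _).image _).measure_zero _
  rw [ae_restrict_iff' measurableSet_Ioo]
  filter_upwards [measure_eq_zero_iff_ae_notMem.mp hE] with s hsE hsIoo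
  refine rearr_negPart_pt Ω v hΩmeas hfin hv s hsIoo.1 hsIoo.2 ?_
  intro q hq
  exact hsE ⟨distrib Ω v (q : ℝ), ⟨(q : ℝ), mem_range_self _, rfl⟩, by rw [hq]; ring⟩
end

section
/- If u is nonnegative Lipschitz on a bounded Lipschitz domain Ω ⊆ ℝⁿ (n ≥ 2) and there exists γ > 0 with P_Ω{u > t} ≥ γ·μ(t)^(1−1/n) for all t ≥ 0, then the Schwarz symmetrization ũ is Lipschitz on the ball Ω̃ with Lipschitz constant at most L·n·cₙ^(1/n)/γ, where L is the Lipschitz constant of u. -/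
open MeasureTheory Set Metric Filter Topology

/-- `cₙ`: the volume of the unit ball in `ℝⁿ`. -/
noncomputable def unitBallVol (n : ℕ) : ℝ :=
  (volume (Metric.ball (0 : EuclideanSpace ℝ (Fin n)) 1)).toReal

/-- `Ω̃`: the open ball centred at the origin with the same measure as `Ω`. -/
noncomputable def ballSameVol {n : ℕ} (Ω : Set (EuclideanSpace ℝ (Fin n))) :
    Set (EuclideanSpace ℝ (Fin n)) :=
  Metric.ball 0 (((volume Ω).toReal / unitBallVol n) ^ ((1 : ℝ) / n))

/-- The Schwarz symmetrization `ũ(x) = u*(cₙ |x|ⁿ)`. -/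
noncomputable def schwarz {n : ℕ} (Ω : Set (EuclideanSpace ℝ (Fin n)))
    (u : EuclideanSpace ℝ (Fin n) → ℝ) (x : EuclideanSpace ℝ (Fin n)) : ℝ :=
  rearr Ω u (unitBallVol n * ‖x‖ ^ n)

/-- The De Giorgi perimeter of a set `E` relative to an open set `Ω`, defined by
duality with compactly supported `C¹` vector fields of norm at most one. -/
noncomputable def relPerimeter {n : ℕ} (Ω E : Set (EuclideanSpace ℝ (Fin n))) : ℝ :=
  sSup { r : ℝ | ∃ φ : EuclideanSpace ℝ (Fin n) → EuclideanSpace ℝ (Fin n),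
    ContDiff ℝ 1 φ ∧ HasCompactSupport φ ∧ tsupport φ ⊆ Ω ∧ (∀ x, ‖φ x‖ ≤ 1) ∧
    r = ∫ x in E, ∑ i, fderiv ℝ φ x (EuclideanSpace.single i 1) i }



variable {n : ℕ}

noncomputable def dlt (k : ℕ) : ℝ := ((k : ℝ) + 1)⁻¹

lemma dlt_pos (k : ℕ) : 0 < dlt k := by unfold dlt; positivity

lemma dlt_tendsto : Tendsto dlt atTop (𝓝[≠] (0:ℝ)) := by
  apply tendsto_nhdsWithin_of_tendsto_nhds_of_eventually_within
  · exact tendsto_one_div_add_atTop_nhds_zero_nat.congr (by simp [dlt, one_div])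
  · exact Eventually.of_forall fun k => (dlt_pos k).ne'

lemma slope_seq_lim {g : EuclideanSpace ℝ (Fin n) → ℝ} {x v : EuclideanSpace ℝ (Fin n)}
    (hd : DifferentiableAt ℝ g x) :
    Tendsto (fun k => (dlt k)⁻¹ * (g (x + dlt k • v) - g x)) atTop (𝓝 (fderiv ℝ g x v)) := by
  have hc : HasDerivAt (fun h : ℝ => x + h • v) v 0 := by
    simpa using ((hasDerivAt_id (0:ℝ)).smul_const v).const_add x
  have hgc : HasDerivAt (fun h : ℝ => g (x + h • v)) (fderiv ℝ g x v) 0 := by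
    have h2 : HasFDerivAt g (fderiv ℝ g x) (x + (0:ℝ) • v) := by
      convert hd.hasFDerivAt using 2; simp
    exact h2.comp_hasDerivAt 0 hc
  have hs := hasDerivAt_iff_tendsto_slope.1 hgc
  have h3 := hs.comp dlt_tendsto
  apply h3.congr
  intro k
  have := (dlt_pos k).ne'
  field_simp [slope, Function.comp]
  simp [slope]
  field_simp


lemma ibp_scalar {f g : EuclideanSpace ℝ (Fin n) → ℝ} {K Kg : NNReal}
    (hf : LipschitzWith K f) (hfc : HasCompactSupport f)
    (hg : ContDiff ℝ 1 g) (hgL : LipschitzWith Kg g) (hgc : HasCompactSupport g)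
    (v : EuclideanSpace ℝ (Fin n)) :
    ∫ x, f x * fderiv ℝ g x v = - ∫ x, fderiv ℝ f x v * g x := by
  have hfcont : Continuous f := hf.continuous
  have hgcont : Continuous g := hg.continuous
  obtain ⟨Cf, hCf⟩ := hfcont.bounded_above_of_compact_support hfc
  set A : ℕ → EuclideanSpace ℝ (Fin n) → ℝ :=
    fun k x => f x * ((dlt k)⁻¹ * (g (x + dlt k • v) - g x)) with hA
  set B : ℕ → EuclideanSpace ℝ (Fin n) → ℝ :=
    fun k x => ((dlt k)⁻¹ * (f (x - dlt k • v) - f x)) * g x with hB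
  have key : ∀ k, ∫ x, A k x = ∫ x, B k x := by
    intro k
    have h1 : Integrable (fun x => f x * g (x + dlt k • v)) := by
      apply ((hfcont.mul (hgcont.comp (by continuity))).integrable_of_hasCompactSupport)
      exact hfc.mul_right
    have h2 : Integrable (fun x => f x * g x) :=
      (hfcont.mul hgcont).integrable_of_hasCompactSupport hfc.mul_right
    have tr : ∫ x, f x * g (x + dlt k • v) = ∫ x, f (x - dlt k • v) * g x := by
      have := MeasureTheory.integral_add_right_eq_self (μ := volume)
        (fun y => f (y - dlt k • v) * g y) (dlt k • v)
      simpa using this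
    have h3 : Integrable (fun x => f (x - dlt k • v) * g x) := by
      apply ((hfcont.comp (by continuity)).mul hgcont).integrable_of_hasCompactSupport
      exact (hgc.mul_left)
    calc ∫ x, A k x = (dlt k)⁻¹ * ((∫ x, f x * g (x + dlt k • v)) - ∫ x, f x * g x) := by
          rw [← integral_sub h1 h2, ← integral_const_mul]
          congr 1; ext x; simp only [hA]; ring
      _ = (dlt k)⁻¹ * ((∫ x, f (x - dlt k • v) * g x) - ∫ x, f x * g x) := by rw [tr]
      _ = ∫ x, B k x := by
          rw [← integral_sub h3 h2, ← integral_const_mul]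
          congr 1; ext x; simp only [hB]; ring
  have limA : Tendsto (fun k => ∫ x, A k x) atTop (𝓝 (∫ x, f x * fderiv ℝ g x v)) := by
    apply tendsto_integral_of_dominated_convergence
      (fun x => (tsupport f).indicator (fun _ => Cf * (Kg * ‖v‖)) x)
    · intro k
      exact ((hfcont.mul (continuous_const.mul ((hgcont.comp (by continuity)).sub
        hgcont)))).aestronglyMeasurable
    · apply (integrable_indicator_iff hfc.isCompact.measurableSet).2
      exact integrableOn_const hfc.isCompact.measure_lt_top.ne
    · intro k
      apply Eventually.of_forall
      intro x
      by_cases hx : x ∈ tsupport f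
      · rw [indicator_of_mem hx]
        have hb : |g (x + dlt k • v) - g x| ≤ Kg * (dlt k * ‖v‖) := by
          have := hgL.dist_le_mul (x + dlt k • v) x
          simpa [Real.dist_eq, norm_smul, abs_of_pos (dlt_pos k)] using this
        calc ‖A k x‖ = ‖f x‖ * ‖(dlt k)⁻¹ * (g (x + dlt k • v) - g x)‖ := norm_mul _ _
          _ ≤ Cf * (Kg * ‖v‖) := by
            apply mul_le_mul (hCf x) ?_ (norm_nonneg _) ((norm_nonneg (f x)).trans (hCf x))
            rw [norm_mul, norm_inv, Real.norm_eq_abs (dlt k), abs_of_pos (dlt_pos k),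
              Real.norm_eq_abs, inv_mul_le_iff₀ (dlt_pos k)]
            calc |g (x + dlt k • v) - g x| ≤ Kg * (dlt k * ‖v‖) := hb
              _ = dlt k * (↑Kg * ‖v‖) := by ring
      · have : f x = 0 := image_eq_zero_of_notMem_tsupport hx
        simp [hA, this, indicator_of_notMem hx]
    · apply Eventually.of_forall
      intro x
      exact (slope_seq_lim (hg.differentiable one_ne_zero x)).const_mul _
  have limB : Tendsto (fun k => ∫ x, B k x) atTop (𝓝 (∫ x, -(fderiv ℝ f x v * g x))) := by
    apply tendsto_integral_of_dominated_convergence (fun x => (K * ‖v‖) * ‖g x‖)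
    · intro k
      exact ((continuous_const.mul ((hfcont.comp (by continuity)).sub hfcont)).mul
        hgcont).aestronglyMeasurable
    · exact (hgcont.norm.integrable_of_hasCompactSupport hgc.norm).const_mul _
    · intro k
      apply Eventually.of_forall
      intro x
      have hb : |f (x - dlt k • v) - f x| ≤ K * (dlt k * ‖v‖) := by
        have := hf.dist_le_mul (x - dlt k • v) x
        simpa [Real.dist_eq, norm_smul, abs_of_pos (dlt_pos k)] using this
      calc ‖B k x‖ = ‖(dlt k)⁻¹ * (f (x - dlt k • v) - f x)‖ * ‖g x‖ := norm_mul _ _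
        _ ≤ (K * ‖v‖) * ‖g x‖ := by
          apply mul_le_mul_of_nonneg_right ?_ (norm_nonneg _)
          rw [norm_mul, norm_inv, Real.norm_eq_abs (dlt k), abs_of_pos (dlt_pos k),
            Real.norm_eq_abs, inv_mul_le_iff₀ (dlt_pos k)]
          calc |f (x - dlt k • v) - f x| ≤ K * (dlt k * ‖v‖) := hb
            _ = dlt k * (↑K * ‖v‖) := by ring
    · filter_upwards [hf.ae_differentiableAt] with x hx
      have h1 : Tendsto (fun k => (dlt k)⁻¹ * (f (x + dlt k • (-v)) - f x)) atTop
          (𝓝 (fderiv ℝ f x (-v))) := slope_seq_lim hx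
      have h2 : Tendsto (fun k => ((dlt k)⁻¹ * (f (x + dlt k • (-v)) - f x)) * g x) atTop
          (𝓝 (fderiv ℝ f x (-v) * g x)) := h1.mul_const _
      have h3 : fderiv ℝ f x (-v) = -(fderiv ℝ f x v) := by
        rw [map_neg]
      rw [h3, neg_mul] at h2
      apply h2.congr
      intro k
      simp only [hB, smul_neg, neg_mul, ← sub_eq_add_neg]
  have limA' : Tendsto (fun k => ∫ x, B k x) atTop (𝓝 (∫ x, f x * fderiv ℝ g x v)) := by
    apply limA.congr
    intro k; exact key k
  have := tendsto_nhds_unique limA' limB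
  rw [this, integral_neg]

lemma euclid_decomp (y : EuclideanSpace ℝ (Fin n)) (T : EuclideanSpace ℝ (Fin n) →L[ℝ] ℝ) :
    T y = ∑ i, T (EuclideanSpace.single i 1) * y i := by
  have hy := (EuclideanSpace.basisFun (Fin n) ℝ).sum_repr y
  conv_lhs => rw [← hy]
  rw [map_sum]
  refine Finset.sum_congr rfl fun i _ => ?_
  rw [_root_.map_smul]
  simp [EuclideanSpace.basisFun_apply, EuclideanSpace.basisFun_repr, mul_comm]

lemma integrable_fderiv_pair {f : EuclideanSpace ℝ (Fin n) → ℝ}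
    {φ : EuclideanSpace ℝ (Fin n) → EuclideanSpace ℝ (Fin n)} {K : NNReal}
    (hf : LipschitzWith K f) (hφcont : Continuous φ) (hφc : HasCompactSupport φ) :
    Integrable (fun x => fderiv ℝ f x (φ x)) := by
  have hmeas : AEStronglyMeasurable (fun x => fderiv ℝ f x (φ x)) volume := by
    apply Measurable.aestronglyMeasurable
    exact isBoundedBilinearMap_apply.continuous.measurable.comp
      ((measurable_fderiv ℝ f).prodMk hφcont.measurable)
  apply Integrable.mono' ((hφcont.norm.integrable_of_hasCompactSupport hφc.norm).const_mul (K : ℝ))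
    hmeas
  apply Eventually.of_forall
  intro x
  calc ‖fderiv ℝ f x (φ x)‖ ≤ ‖fderiv ℝ f x‖ * ‖φ x‖ := (fderiv ℝ f x).le_opNorm _
    _ ≤ K * ‖φ x‖ := by
        apply mul_le_mul_of_nonneg_right (norm_fderiv_le_of_lipschitz ℝ hf) (norm_nonneg _)

set_option maxHeartbeats 1000000 in
lemma ibp_div {f : EuclideanSpace ℝ (Fin n) → ℝ} {K : NNReal}
    (hf : LipschitzWith K f) (hfc : HasCompactSupport f)
    {φ : EuclideanSpace ℝ (Fin n) → EuclideanSpace ℝ (Fin n)}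
    (hφ : ContDiff ℝ 1 φ) (hφc : HasCompactSupport φ) :
    ∫ x, f x * (∑ i, fderiv ℝ φ x (EuclideanSpace.single i 1) i)
      = - ∫ x, fderiv ℝ f x (φ x) := by
  obtain ⟨Kφ, hKφ⟩ := hφ.lipschitzWith_of_hasCompactSupport hφc one_ne_zero
  have hφcont : Continuous φ := hφ.continuous
  set φi : Fin n → EuclideanSpace ℝ (Fin n) → ℝ := fun i x => φ x i with hφi
  have hφiC : ∀ i, ContDiff ℝ 1 (φi i) := fun i =>
    (EuclideanSpace.proj (𝕜 := ℝ) i).contDiff.comp hφ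
  have hφiL : ∀ i, LipschitzWith (‖(EuclideanSpace.proj i : EuclideanSpace ℝ (Fin n) →L[ℝ] ℝ)‖₊ * Kφ) (φi i) := fun i =>
    (EuclideanSpace.proj (𝕜 := ℝ) i).lipschitz.comp hKφ
  have hφic : ∀ i, HasCompactSupport (φi i) := fun i =>
    hφc.comp_left (g := EuclideanSpace.proj (𝕜 := ℝ) i) (map_zero _)
  have hfd : ∀ i x, fderiv ℝ (φi i) x = (EuclideanSpace.proj (𝕜 := ℝ) i).comp (fderiv ℝ φ x) := by
    intro i x
    exact (((EuclideanSpace.proj (𝕜 := ℝ) i).hasFDerivAt.comp x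
      (hφ.differentiable one_ne_zero x).hasFDerivAt)).fderiv
  have step1 : ∫ x, f x * (∑ i, fderiv ℝ φ x (EuclideanSpace.single i 1) i)
      = ∑ i, ∫ x, f x * fderiv ℝ (φi i) x (EuclideanSpace.single i 1) := by
    rw [← integral_finset_sum]
    · congr 1; ext x
      rw [Finset.mul_sum]
      congr 1; ext i
      rw [hfd]; rfl
    · intro i _
      apply (hf.continuous.mul ?_).integrable_of_hasCompactSupport hfc.mul_right
      have : Continuous fun x => fderiv ℝ (φi i) x := (hφiC i).continuous_fderiv one_ne_zero
      exact isBoundedBilinearMap_apply.continuous.comp (this.prodMk continuous_const)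
  have step2 : ∀ i, ∫ x, f x * fderiv ℝ (φi i) x (EuclideanSpace.single i 1)
      = - ∫ x, fderiv ℝ f x (EuclideanSpace.single i 1) * φi i x := fun i =>
    ibp_scalar hf hfc (hφiC i) (hφiL i) (hφic i) _
  have step3 : ∑ i, ∫ x, fderiv ℝ f x (EuclideanSpace.single i 1) * φi i x
      = ∫ x, fderiv ℝ f x (φ x) := by
    rw [← integral_finset_sum]
    · congr 1; ext x
      rw [← euclid_decomp (φ x) (fderiv ℝ f x)]
    · intro i _
      apply Integrable.mono'
        (((hφiC i).continuous.norm.integrable_of_hasCompactSupport (hφic i).norm).const_mul (K : ℝ))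
      · exact ((measurable_fderiv_apply_const ℝ f _).mul
          ((hφiC i).continuous.measurable)).aestronglyMeasurable
      · apply Eventually.of_forall
        intro x
        rw [norm_mul]
        apply mul_le_mul_of_nonneg_right ?_ (norm_nonneg _)
        calc ‖fderiv ℝ f x (EuclideanSpace.single i 1)‖
            ≤ ‖fderiv ℝ f x‖ * ‖EuclideanSpace.single i (1:ℝ)‖ := (fderiv ℝ f x).le_opNorm _
          _ ≤ K * 1 := by
              apply mul_le_mul (norm_fderiv_le_of_lipschitz ℝ hf) ?_ (norm_nonneg _) K.coe_nonneg
              simp [EuclideanSpace.norm_single]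
          _ = K := mul_one _
  rw [step1, Finset.sum_congr rfl (fun i _ => step2 i), Finset.sum_neg_distrib, step3]

variable {n : ℕ} {Ω : Set (EuclideanSpace ℝ (Fin n))} {u : EuclideanSpace ℝ (Fin n) → ℝ}
  {L : NNReal}

lemma Et_eq (t : ℝ) : {x ∈ Ω | t < u x} = Ω ∩ u ⁻¹' (Ioi t) := rfl

lemma isOpen_Et (hΩo : IsOpen Ω) (hu : LipschitzOnWith L u Ω) (t : ℝ) :
    IsOpen {x ∈ Ω | t < u x} := by
  rw [Et_eq]
  exact hu.continuousOn.isOpen_inter_preimage hΩo isOpen_Ioi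

lemma vol_Et_lt_top (hΩbd : Bornology.IsBounded Ω) (t : ℝ) :
    volume {x ∈ Ω | t < u x} < ⊤ :=
  lt_of_le_of_lt (measure_mono (sep_subset _ _)) hΩbd.measure_lt_top

lemma Et_subset {t s : ℝ} (h : t ≤ s) : {x ∈ Ω | s < u x} ⊆ {x ∈ Ω | t < u x} :=
  fun x hx => ⟨hx.1, lt_of_le_of_lt h hx.2⟩

lemma distrib_antitone (hΩbd : Bornology.IsBounded Ω) : Antitone (distrib Ω u) := by
  intro t s h
  exact ENNReal.toReal_mono (vol_Et_lt_top hΩbd t).ne (measure_mono (Et_subset h))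

lemma distrib_nonneg (t : ℝ) : 0 ≤ distrib Ω u t := ENNReal.toReal_nonneg

/-- measure of a set squeezed between two level sets -/
lemma vol_sandwich (hΩo : IsOpen Ω) (hΩbd : Bornology.IsBounded Ω)
    (hu : LipschitzOnWith L u Ω) {a b : ℝ} (hab : a ≤ b) (A : Set (EuclideanSpace ℝ (Fin n)))
    (hA : A ⊆ {x ∈ Ω | a < u x}) (hdisj : Disjoint A {x ∈ Ω | b < u x}) :
    (volume A).toReal ≤ distrib Ω u a - distrib Ω u b := by
  have hEb : MeasurableSet {x ∈ Ω | b < u x} := (isOpen_Et hΩo hu b).measurableSet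
  have hsub : A ∪ {x ∈ Ω | b < u x} ⊆ {x ∈ Ω | a < u x} :=
    union_subset hA (Et_subset hab)
  have := measure_union (μ := volume) hdisj hEb
  have hle : volume A + volume {x ∈ Ω | b < u x} ≤ volume {x ∈ Ω | a < u x} := by
    rw [← this]; exact measure_mono hsub
  have hA_fin : volume A < ⊤ := lt_of_le_of_lt (measure_mono hA) (vol_Et_lt_top hΩbd a)
  have hb_fin := vol_Et_lt_top (u := u) hΩbd b
  have ha_fin := vol_Et_lt_top (u := u) hΩbd a
  unfold distrib
  rw [le_sub_iff_add_le, ← ENNReal.toReal_add hA_fin.ne hb_fin.ne]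
  exact ENNReal.toReal_mono ha_fin.ne hle

lemma distrib_right_continuous (hΩbd : Bornology.IsBounded Ω) (t : ℝ) :
    ContinuousWithinAt (distrib Ω u) (Ici t) t := by
  rw [← continuousWithinAt_Ioi_iff_Ici]
  have hanti : Antitone (distrib Ω u) := distrib_antitone hΩbd
  have h1 := hanti.tendsto_nhdsGT t
  have hseq : Tendsto (fun k : ℕ => distrib Ω u (t + ((k : ℝ) + 1)⁻¹)) atTop
      (𝓝 (distrib Ω u t)) := by
    have hmono : Monotone (fun k : ℕ => {x ∈ Ω | t + ((k : ℝ)+1)⁻¹ < u x}) := by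
      intro k m hkm
      apply Et_subset
      have hk : (0:ℝ) < (k:ℝ)+1 := by positivity
      have h2 : (k:ℝ)+1 ≤ (m:ℝ)+1 := by exact_mod_cast Nat.succ_le_succ hkm
      have h3 := one_div_le_one_div_of_le hk h2
      simp only [one_div] at h3
      linarith
    have hun : (⋃ k : ℕ, {x ∈ Ω | t + ((k : ℝ)+1)⁻¹ < u x}) = {x ∈ Ω | t < u x} := by
      ext x
      simp only [mem_iUnion, mem_sep_iff]
      constructor
      · rintro ⟨k, hx1, hx2⟩
        exact ⟨hx1, by linarith [show (0:ℝ) < ((k:ℝ)+1)⁻¹ by positivity]⟩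
      · rintro ⟨hx1, hx2⟩
        obtain ⟨k, hk⟩ := exists_nat_one_div_lt (sub_pos.2 hx2)
        refine ⟨k, hx1, ?_⟩
        rw [one_div] at hk
        linarith
    have := tendsto_measure_iUnion_atTop (μ := volume) hmono
    rw [hun] at this
    have hfin : volume {x ∈ Ω | t < u x} ≠ ⊤ := (vol_Et_lt_top hΩbd t).ne
    have := (ENNReal.tendsto_toReal hfin).comp this
    exact this
  -- identify the limit
  have hlim : sSup (distrib Ω u '' Ioi t) = distrib Ω u t := by
    apply le_antisymm
    · apply csSup_le (by exact (nonempty_Ioi.image _))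
      rintro y ⟨s, hs, rfl⟩
      exact hanti (le_of_lt hs)
    · have hbdd : BddAbove (distrib Ω u '' Ioi t) := by
        refine ⟨distrib Ω u t, ?_⟩
        rintro y ⟨s, hs, rfl⟩
        exact hanti (le_of_lt hs)
      apply le_of_tendsto hseq
      apply Eventually.of_forall
      intro k
      apply le_csSup hbdd
      exact ⟨t + ((k:ℝ)+1)⁻¹,
        by simp only [mem_Ioi]; linarith [show (0:ℝ) < ((k:ℝ)+1)⁻¹ by positivity], rfl⟩
  have hgoal : ContinuousWithinAt (distrib Ω u) (Ioi t) t := by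
    unfold ContinuousWithinAt
    rw [← hlim]
    exact h1
  exact hgoal

section PartE
variable {n : ℕ} {Ω : Set (EuclideanSpace ℝ (Fin n))} {u : EuclideanSpace ℝ (Fin n) → ℝ}
  {L : NNReal}

lemma collar_mem (hu : LipschitzOnWith L u Ω) {t r : ℝ}
    (hne : {x ∈ Ω | t < u x}.Nonempty) {x : EuclideanSpace ℝ (Fin n)} (hx : x ∈ Ω)
    (hlt : infDist x {x ∈ Ω | t < u x} < r) : t - L * r < u x := by
  obtain ⟨y, hy, hdist⟩ := (infDist_lt_iff hne).1 hlt
  have h1 : dist (u x) (u y) ≤ L * dist x y := hu.dist_le_mul x hx y hy.1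
  have h2 : (L : ℝ) * dist x y ≤ L * r := by
    apply mul_le_mul_of_nonneg_left hdist.le L.coe_nonneg
  have h3 := abs_le.1 (by rwa [Real.dist_eq] at h1)
  have := hy.2
  linarith [h3.1]

/-- the test function used to bound the perimeter by the Minkowski collar content -/
noncomputable def collarFn (E : Set (EuclideanSpace ℝ (Fin n))) (r : ℝ)
    (x : EuclideanSpace ℝ (Fin n)) : ℝ := max 0 (1 - infDist x E / r)

lemma collarFn_lipschitz (E : Set (EuclideanSpace ℝ (Fin n))) {r : ℝ} (hr : 0 < r) :
    LipschitzWith (Real.toNNReal r⁻¹) (collarFn E r) := by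
  have houter : LipschitzWith (Real.toNNReal r⁻¹) (fun y : ℝ => max 0 (1 - y / r)) := by
    apply LipschitzWith.of_dist_le_mul
    intro a b
    rw [Real.dist_eq, Real.dist_eq, Real.coe_toNNReal _ (by positivity)]
    rw [max_comm 0 (1 - a / r), max_comm 0 (1 - b / r)]
    calc |max (1 - a / r) 0 - max (1 - b / r) 0| ≤ |(1 - a / r) - (1 - b / r)| :=
          abs_max_sub_max_le_abs _ _ _
      _ = r⁻¹ * |a - b| := by
          rw [show (1 - a / r) - (1 - b / r) = r⁻¹ * (b - a) by field_simp; ring]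
          rw [abs_mul, abs_of_pos (by positivity : (0:ℝ) < r⁻¹), abs_sub_comm]
  have := houter.comp (lipschitz_infDist_pt E)
  rw [mul_one] at this
  exact this

lemma collarFn_nonneg (E : Set (EuclideanSpace ℝ (Fin n))) (r : ℝ) (x : EuclideanSpace ℝ (Fin n)) :
    0 ≤ collarFn E r x := le_max_left _ _

lemma collarFn_le_one (E : Set (EuclideanSpace ℝ (Fin n))) {r : ℝ} (hr : 0 < r)
    (x : EuclideanSpace ℝ (Fin n)) : collarFn E r x ≤ 1 := by
  apply max_le zero_le_one
  have : 0 ≤ infDist x E / r := div_nonneg infDist_nonneg hr.le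
  linarith

lemma collarFn_eq_one {E : Set (EuclideanSpace ℝ (Fin n))} {r : ℝ} (hr : 0 < r)
    {x : EuclideanSpace ℝ (Fin n)} (hx : infDist x E = 0) : collarFn E r x = 1 := by
  simp [collarFn, hx]

lemma collarFn_eq_zero {E : Set (EuclideanSpace ℝ (Fin n))} {r : ℝ} (hr : 0 < r)
    {x : EuclideanSpace ℝ (Fin n)} (hx : r ≤ infDist x E) : collarFn E r x = 0 := by
  apply max_eq_left
  have : 1 ≤ infDist x E / r := (one_le_div hr).2 hx
  linarith

lemma collarFn_compactSupport {E : Set (EuclideanSpace ℝ (Fin n))} {r R : ℝ} (hr : 0 < r)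
    (hne : E.Nonempty) (hE : E ⊆ closedBall 0 R) : HasCompactSupport (collarFn E r) := by
  apply HasCompactSupport.intro (isCompact_closedBall (0 : EuclideanSpace ℝ (Fin n)) (R + r))
  intro x hx
  apply collarFn_eq_zero hr
  by_contra hlt
  push_neg at hlt
  obtain ⟨y, hy, hdist⟩ := (infDist_lt_iff hne).1 hlt
  have h1 : dist y 0 ≤ R := hE hy
  have h2 : dist x 0 ≤ dist x y + dist y 0 := dist_triangle _ _ _
  have : x ∈ closedBall (0 : EuclideanSpace ℝ (Fin n)) (R + r) := by
    rw [mem_closedBall]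
    linarith
  exact hx this

lemma fderiv_collarFn_zero_of_mem {E : Set (EuclideanSpace ℝ (Fin n))} {r : ℝ} (hr : 0 < r)
    {x : EuclideanSpace ℝ (Fin n)} (hx : infDist x E = 0) :
    fderiv ℝ (collarFn E r) x = 0 := by
  apply IsLocalMax.fderiv_eq_zero
  apply IsMaxOn.isLocalMax (s := univ) ?_ univ_mem
  intro y _
  rw [collarFn_eq_one hr hx]
  exact collarFn_le_one E hr y

lemma fderiv_collarFn_zero_of_far {E : Set (EuclideanSpace ℝ (Fin n))} {r : ℝ} (hr : 0 < r)
    {x : EuclideanSpace ℝ (Fin n)} (hx : r ≤ infDist x E) :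
    fderiv ℝ (collarFn E r) x = 0 := by
  apply IsLocalMin.fderiv_eq_zero
  apply IsMinOn.isLocalMin (s := univ) ?_ univ_mem
  intro y _
  rw [collarFn_eq_zero hr hx]
  exact collarFn_nonneg E r y

end PartE
section PartE2
variable {n : ℕ} {Ω : Set (EuclideanSpace ℝ (Fin n))} {u : EuclideanSpace ℝ (Fin n) → ℝ}
  {L : NNReal}

/-- divergence of a vector field -/
noncomputable def dvg (φ : EuclideanSpace ℝ (Fin n) → EuclideanSpace ℝ (Fin n))
    (x : EuclideanSpace ℝ (Fin n)) : ℝ :=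
  ∑ i, fderiv ℝ φ x (EuclideanSpace.single i 1) i

lemma dvg_continuous {φ : EuclideanSpace ℝ (Fin n) → EuclideanSpace ℝ (Fin n)}
    (hφ : ContDiff ℝ 1 φ) : Continuous (dvg φ) := by
  apply continuous_finset_sum
  intro i _
  have h1 : Continuous fun x => fderiv ℝ φ x := hφ.continuous_fderiv one_ne_zero
  have h2 : Continuous fun x => fderiv ℝ φ x (EuclideanSpace.single i 1) :=
    isBoundedBilinearMap_apply.continuous.comp (h1.prodMk continuous_const)
  exact (EuclideanSpace.proj (𝕜 := ℝ) i).continuous.comp h2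

lemma dvg_zero_of_nmem {φ : EuclideanSpace ℝ (Fin n) → EuclideanSpace ℝ (Fin n)}
    {x : EuclideanSpace ℝ (Fin n)} (hx : x ∉ tsupport φ) : dvg φ x = 0 := by
  have h1 : φ =ᶠ[𝓝 x] 0 := notMem_tsupport_iff_eventuallyEq.mp hx
  have h2 : fderiv ℝ φ x = fderiv ℝ (fun _ => (0 : EuclideanSpace ℝ (Fin n))) x := h1.fderiv_eq
  rw [dvg]
  simp [h2]

lemma dvg_compactSupport {φ : EuclideanSpace ℝ (Fin n) → EuclideanSpace ℝ (Fin n)}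
    (hφc : HasCompactSupport φ) : HasCompactSupport (dvg φ) :=
  HasCompactSupport.intro hφc fun x hx => dvg_zero_of_nmem hx

set_option maxHeartbeats 1600000 in
lemma perimeter_bound (hΩo : IsOpen Ω) (hΩbd : Bornology.IsBounded Ω)
    (hu : LipschitzOnWith L u Ω) (hL : 0 < (L : ℝ)) {t m : ℝ}
    (hne : {x ∈ Ω | t < u x}.Nonempty)
    (hd : HasDerivAt (distrib Ω u) m t) :
    relPerimeter Ω {x ∈ Ω | t < u x} ≤ -(L : ℝ) * m := by
  have hanti : Antitone (distrib Ω u) := distrib_antitone hΩbd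
  -- the derivative is nonpositive
  have hm : m ≤ 0 := by
    have hslope := hasDerivAt_iff_tendsto_slope.1 hd
    have h2 : Tendsto (slope (distrib Ω u) t) (𝓝[>] t) (𝓝 m) :=
      hslope.mono_left (nhdsWithin_mono _ fun y hy => ne_of_gt hy)
    apply le_of_tendsto h2
    filter_upwards [eventually_mem_nhdsWithin] with s hs
    have h3 : distrib Ω u s ≤ distrib Ω u t := hanti (le_of_lt hs)
    rw [slope_def_field]
    apply div_nonpos_of_nonpos_of_nonneg (by linarith) (by linarith [mem_Ioi.1 hs])
  have h0L : (0:ℝ) ≤ -(L:ℝ) * m := by nlinarith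
  apply Real.sSup_le _ h0L
  rintro b ⟨φ, hφ1, hφ2, hφ3, hφ4, rfl⟩
  show (∫ x in {x ∈ Ω | t < u x}, dvg φ x) ≤ -(L:ℝ) * m
  set E := {x ∈ Ω | t < u x} with hE
  have hEmeas : MeasurableSet E := (isOpen_Et hΩo hu t).measurableSet
  have hdvgcont : Continuous (dvg φ) := dvg_continuous hφ1
  have hdvgint : Integrable (dvg φ) := hdvgcont.integrable_of_hasCompactSupport
    (dvg_compactSupport hφ2)
  obtain ⟨M0, hM0⟩ := hdvgcont.bounded_above_of_compact_support (dvg_compactSupport hφ2)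
  set Mφ := max M0 0 with hMφdef
  have hMφ : ∀ x, |dvg φ x| ≤ Mφ := fun x => le_trans (hM0 x) (le_max_left _ _)
  have hMφ0 : (0:ℝ) ≤ Mφ := le_max_right _ _
  obtain ⟨R, hR⟩ := hΩbd.subset_closedBall 0
  have hER : E ⊆ closedBall 0 R := fun x hx => hR hx.1
  -- the collar estimate for every k
  have key : ∀ k : ℕ, (∫ x in E, dvg φ x) ≤
      ((dlt k)⁻¹ + Mφ) * (distrib Ω u (t - L * dlt k) - distrib Ω u t) := by
    intro k
    set r := dlt k with hr'
    have hr := dlt_pos k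
    have htle : t - L * r ≤ t := by nlinarith
    set f := collarFn E r with hf'
    have hflip := collarFn_lipschitz E hr
    have hfc := collarFn_compactSupport hr hne hER
    have hibp := ibp_div hflip hfc hφ1 hφ2
    -- the collar sets
    set A := Ω ∩ {x | 0 < infDist x E ∧ infDist x E < r} with hA'
    have hAopen : IsOpen A := by
      apply hΩo.inter
      have h1 : IsOpen {x : EuclideanSpace ℝ (Fin n) | 0 < infDist x E ∧ infDist x E < r} := by
        have := (continuous_infDist_pt E)
        exact (isOpen_Ioo (a := (0:ℝ)) (b := r)).preimage this
      exact h1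
    set B := (Ω ∩ {x | infDist x E < r}) \ E with hB'
    have hBmeas : MeasurableSet B := by
      apply MeasurableSet.diff _ hEmeas
      exact (hΩo.inter (isOpen_Iio.preimage (continuous_infDist_pt E))).measurableSet
    -- both collar sets are sandwiched between the level sets
    have hsand : ∀ S : Set (EuclideanSpace ℝ (Fin n)),
        S ⊆ Ω → (∀ x ∈ S, infDist x E < r) → (∀ x ∈ S, x ∉ E) →
        (volume S).toReal ≤ distrib Ω u (t - L * r) - distrib Ω u t := by
      intro S hS1 hS2 hS3
      apply vol_sandwich hΩo hΩbd hu htle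
      · intro x hx
        exact ⟨hS1 hx, collar_mem hu hne (hS1 hx) (hS2 x hx)⟩
      · rw [disjoint_left]
        intro x hx hxE
        exact hS3 x hx hxE
    have hAvol : (volume A).toReal ≤ distrib Ω u (t - L * r) - distrib Ω u t := by
      apply hsand A inter_subset_left (fun x hx => hx.2.2)
      intro x hx hxE
      have := infDist_zero_of_mem hxE
      have := hx.2.1
      linarith
    have hBvol : (volume B).toReal ≤ distrib Ω u (t - L * r) - distrib Ω u t := by
      apply hsand B (fun x hx => hx.1.1) (fun x hx => hx.1.2)
      exact fun x hx => hx.2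
    -- step 1 : the gradient-term bound
    have hAfin : volume A < ⊤ := lt_of_le_of_lt (measure_mono inter_subset_left)
      hΩbd.measure_lt_top
    have hint1 : Integrable (fun x => -(fderiv ℝ f x (φ x))) :=
      (integrable_fderiv_pair hflip hφ1.continuous hφ2).neg
    have hint2 : Integrable (fun x => A.indicator (fun _ => (dlt k)⁻¹) x) := by
      rw [integrable_indicator_iff hAopen.measurableSet]
      exact integrableOn_const hAfin.ne
    have hpt : ∀ x, -(fderiv ℝ f x (φ x)) ≤ A.indicator (fun _ => (dlt k)⁻¹) x := by
      intro x
      have hind0 : (0:ℝ) ≤ A.indicator (fun _ => (dlt k)⁻¹) x :=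
        indicator_nonneg (fun _ _ => by positivity) x
      by_cases hx1 : infDist x E = 0
      · rw [hf', fderiv_collarFn_zero_of_mem hr hx1]
        simpa using hind0
      by_cases hx2 : r ≤ infDist x E
      · rw [hf', fderiv_collarFn_zero_of_far hr hx2]
        simpa using hind0
      by_cases hx3 : x ∈ Ω
      · have hxA : x ∈ A := ⟨hx3,
          lt_of_le_of_ne infDist_nonneg (Ne.symm hx1), not_le.1 hx2⟩
        rw [indicator_of_mem hxA]
        calc -(fderiv ℝ f x (φ x)) ≤ ‖fderiv ℝ f x (φ x)‖ := neg_le_abs _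
          _ ≤ ‖fderiv ℝ f x‖ * ‖φ x‖ := (fderiv ℝ f x).le_opNorm _
          _ ≤ (dlt k)⁻¹ * 1 := by
              apply mul_le_mul ?_ (hφ4 x) (norm_nonneg _) (by positivity)
              have := norm_fderiv_le_of_lipschitz (x₀ := x) ℝ hflip
              rwa [Real.coe_toNNReal _ (by positivity)] at this
          _ = (dlt k)⁻¹ := mul_one _
      · have hxφ : φ x = 0 := image_eq_zero_of_notMem_tsupport (fun hmem => hx3 (hφ3 hmem))
        rw [hxφ]
        simpa using hind0
    have step1 : -(∫ x, fderiv ℝ f x (φ x)) ≤ (dlt k)⁻¹ * (volume A).toReal := by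
      rw [← integral_neg]
      calc (∫ x, -(fderiv ℝ f x (φ x))) ≤ ∫ x, A.indicator (fun _ => (dlt k)⁻¹) x :=
            integral_mono hint1 hint2 hpt
        _ = (volume A).toReal • (dlt k)⁻¹ := integral_indicator_const _ hAopen.measurableSet
        _ = (dlt k)⁻¹ * (volume A).toReal := by rw [smul_eq_mul, mul_comm]
    -- step 3 : comparison of ∫_E dvg with ∫ f·dvg
    have hint3 : Integrable (E.indicator (dvg φ)) := hdvgint.indicator hEmeas
    have hint4 : Integrable (fun x => f x * dvg φ x) := by
      apply (hflip.continuous.mul hdvgcont).integrable_of_hasCompactSupport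
      exact hfc.mul_right
    have hint5 : Integrable (fun x => Mφ * B.indicator (fun _ => (1:ℝ)) x) := by
      apply Integrable.const_mul
      rw [integrable_indicator_iff hBmeas]
      apply integrableOn_const (ne_of_lt _)
      exact lt_of_le_of_lt (measure_mono (fun x hx => hx.1.1)) hΩbd.measure_lt_top
    have hptB : ∀ x, E.indicator (dvg φ) x - f x * dvg φ x ≤
        Mφ * B.indicator (fun _ => (1:ℝ)) x := by
      intro x
      have hBnn : (0:ℝ) ≤ Mφ * B.indicator (fun _ => (1:ℝ)) x :=
        mul_nonneg hMφ0 (indicator_nonneg (fun _ _ => zero_le_one) x)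
      by_cases hxE : x ∈ E
      · rw [indicator_of_mem hxE, hf', collarFn_eq_one hr (infDist_zero_of_mem hxE), one_mul,
          sub_self]
        exact hBnn
      · rw [indicator_of_notMem hxE, zero_sub]
        by_cases hx2 : r ≤ infDist x E
        · rw [hf', collarFn_eq_zero hr hx2]
          simpa using hBnn
        by_cases hx3 : x ∈ Ω
        · have hxB : x ∈ B := ⟨⟨hx3, not_le.1 hx2⟩, hxE⟩
          rw [indicator_of_mem hxB, mul_one]
          calc -(f x * dvg φ x) ≤ |f x * dvg φ x| := neg_le_abs _
            _ = |f x| * |dvg φ x| := abs_mul _ _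
            _ ≤ 1 * Mφ := by
                apply mul_le_mul _ (hMφ x) (abs_nonneg _) zero_le_one
                rw [abs_of_nonneg (collarFn_nonneg E r x)]
                exact collarFn_le_one E hr x
            _ = Mφ := one_mul _
        · have hxφ : dvg φ x = 0 :=
            dvg_zero_of_nmem (fun hmem => hx3 (hφ3 hmem))
          rw [hxφ, mul_zero, neg_zero]
          exact hBnn
    have step3 : (∫ x in E, dvg φ x) - (∫ x, f x * dvg φ x) ≤
        Mφ * (distrib Ω u (t - L * r) - distrib Ω u t) := by
      have h1 : (∫ x in E, dvg φ x) = ∫ x, E.indicator (dvg φ) x := by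
        rw [integral_indicator hEmeas]
      rw [h1, ← integral_sub hint3 hint4]
      calc (∫ x, (E.indicator (dvg φ) x - f x * dvg φ x))
          ≤ ∫ x, Mφ * B.indicator (fun _ => (1:ℝ)) x :=
            integral_mono (hint3.sub hint4) hint5 hptB
        _ = Mφ * ((volume B).toReal • (1:ℝ)) := by
            rw [integral_const_mul, integral_indicator_const _ hBmeas]; rfl
        _ = Mφ * (volume B).toReal := by rw [smul_eq_mul, mul_one]
        _ ≤ Mφ * (distrib Ω u (t - L * r) - distrib Ω u t) :=
            mul_le_mul_of_nonneg_left hBvol hMφ0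
    -- combine
    have hibp' : (∫ x, f x * dvg φ x) = -(∫ x, fderiv ℝ f x (φ x)) := hibp
    calc (∫ x in E, dvg φ x)
        = ((∫ x in E, dvg φ x) - (∫ x, f x * dvg φ x)) + (∫ x, f x * dvg φ x) := by ring
      _ ≤ Mφ * (distrib Ω u (t - L * r) - distrib Ω u t)
            + (dlt k)⁻¹ * (volume A).toReal := by
          apply add_le_add step3
          rw [hibp']; exact step1
      _ ≤ Mφ * (distrib Ω u (t - L * r) - distrib Ω u t)
            + (dlt k)⁻¹ * (distrib Ω u (t - L * r) - distrib Ω u t) := by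
          apply add_le_add_right
          apply mul_le_mul_of_nonneg_left hAvol (by positivity)
      _ = ((dlt k)⁻¹ + Mφ) * (distrib Ω u (t - L * r) - distrib Ω u t) := by ring
  -- pass to the limit k → ∞
  have hslope := hasDerivAt_iff_tendsto_slope.1 hd
  have hseq : Tendsto (fun k => t - (L:ℝ) * dlt k) atTop (𝓝[≠] t) := by
    apply tendsto_nhdsWithin_of_tendsto_nhds_of_eventually_within
    · have h1 : Tendsto dlt atTop (𝓝 0) := dlt_tendsto.mono_right nhdsWithin_le_nhds
      have h2 : Tendsto (fun k => t - (L:ℝ) * dlt k) atTop (𝓝 (t - L * 0)) :=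
        (tendsto_const_nhds.sub (h1.const_mul _))
      simpa using h2
    · apply Eventually.of_forall
      intro k
      have := dlt_pos k
      have : (L:ℝ) * dlt k > 0 := mul_pos hL (dlt_pos k)
      simp only [mem_compl_iff, mem_singleton_iff]
      intro hcontra
      nlinarith [sub_eq_self.1 hcontra]
  have hsl : Tendsto (fun k => slope (distrib Ω u) t (t - L * dlt k)) atTop (𝓝 m) :=
    hslope.comp hseq
  have hδeq : ∀ k, distrib Ω u (t - L * dlt k) - distrib Ω u t =
      slope (distrib Ω u) t (t - L * dlt k) * (-(L:ℝ) * dlt k) := by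
    intro k
    rw [slope_def_field]
    have h1 : (0:ℝ) < (L:ℝ) * dlt k := mul_pos hL (dlt_pos k)
    have h2 : t - (L:ℝ) * dlt k - t = -(L:ℝ) * dlt k := by ring
    rw [h2]
    field_simp
    rw [mul_div_cancel_left₀ _ (dlt_pos k).ne']
  have hlim : Tendsto (fun k => ((dlt k)⁻¹ + Mφ) *
      (distrib Ω u (t - L * dlt k) - distrib Ω u t)) atTop (𝓝 (-(L:ℝ) * m)) := by
    have hrw : ∀ k, ((dlt k)⁻¹ + Mφ) * (distrib Ω u (t - L * dlt k) - distrib Ω u t)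
        = -(L:ℝ) * slope (distrib Ω u) t (t - L * dlt k)
          + (Mφ * (-(L:ℝ))) * (slope (distrib Ω u) t (t - L * dlt k) * dlt k) := by
      intro k
      rw [hδeq k]
      have := (dlt_pos k).ne'
      field_simp
      ring
    have h1 : Tendsto (fun k => -(L:ℝ) * slope (distrib Ω u) t (t - L * dlt k)) atTop
        (𝓝 (-(L:ℝ) * m)) := hsl.const_mul _
    have hdlt0 : Tendsto dlt atTop (𝓝 0) := dlt_tendsto.mono_right nhdsWithin_le_nhds
    have h2 : Tendsto (fun k => (Mφ * (-(L:ℝ))) *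
        (slope (distrib Ω u) t (t - L * dlt k) * dlt k)) atTop (𝓝 0) := by
      have h3 := (hsl.mul hdlt0).const_mul (Mφ * (-(L:ℝ)))
      simpa using h3
    have := h1.add h2
    rw [add_zero] at this
    exact this.congr fun k => (hrw k).symm
  exact ge_of_tendsto hlim (Eventually.of_forall key)

end PartE2
section PartG
variable {n : ℕ} {Ω : Set (EuclideanSpace ℝ (Fin n))} {u : EuclideanSpace ℝ (Fin n) → ℝ}
  {L : NNReal}

lemma distrib_neg (hu0 : ∀ x ∈ Ω, 0 ≤ u x) {t : ℝ} (ht : t < 0) :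
    distrib Ω u t = (volume Ω).toReal := by
  unfold distrib
  have hset : {x ∈ Ω | t < u x} = Ω := by
    ext x
    simp only [mem_sep_iff, and_iff_left_iff_imp]
    intro hx
    exact lt_of_lt_of_le ht (hu0 x hx)
  rw [hset]

lemma exists_level_zero (hΩbd : Bornology.IsBounded Ω) (hu : LipschitzOnWith L u Ω)
    (hΩne : Ω.Nonempty) : ∃ T : ℝ, ∀ t, T ≤ t → distrib Ω u t = 0 := by
  obtain ⟨x0, hx0⟩ := hΩne
  obtain ⟨R, hR⟩ := hΩbd.subset_closedBall 0
  refine ⟨u x0 + L * (2 * R), fun t ht => ?_⟩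
  have hempty : {x ∈ Ω | t < u x} = ∅ := by
    ext x
    simp only [mem_sep_iff, mem_empty_iff_false, iff_false, not_and, not_lt]
    intro hx
    have h1 : dist (u x) (u x0) ≤ L * dist x x0 := hu.dist_le_mul x hx x0 hx0
    have h2 : dist x x0 ≤ dist x 0 + dist x0 0 := dist_triangle_right _ _ _
    have h3 : dist x 0 ≤ R := hR hx
    have h4 : dist x0 0 ≤ R := hR hx0
    have h5 := (abs_le.1 (by rwa [Real.dist_eq] at h1)).2
    have h6 : (L:ℝ) * dist x x0 ≤ L * (2 * R) := by
      apply mul_le_mul_of_nonneg_left (by linarith) L.coe_nonneg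
    linarith
  rw [distrib, hempty]
  simp

lemma rearr_set_nonempty (hΩbd : Bornology.IsBounded Ω) (hu : LipschitzOnWith L u Ω)
    (hΩne : Ω.Nonempty) {s : ℝ} (hs : 0 ≤ s) : {t : ℝ | distrib Ω u t ≤ s}.Nonempty := by
  obtain ⟨T, hT⟩ := exists_level_zero hΩbd hu hΩne
  exact ⟨T, by rw [mem_setOf_eq, hT T le_rfl]; exact hs⟩

lemma rearr_set_pos (hu0 : ∀ x ∈ Ω, 0 ≤ u x) {s : ℝ} (hs : s < (volume Ω).toReal) :
    {t : ℝ | distrib Ω u t ≤ s} ⊆ Ici 0 := by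
  intro t ht
  by_contra hneg
  rw [mem_Ici, not_le] at hneg
  rw [mem_setOf_eq, distrib_neg hu0 hneg] at ht
  linarith

lemma rearr_nonneg (hu0 : ∀ x ∈ Ω, 0 ≤ u x) {s : ℝ} (hs : s < (volume Ω).toReal) :
    0 ≤ rearr Ω u s :=
  Real.sInf_nonneg fun _ ht => rearr_set_pos hu0 hs ht

lemma rearr_antitone (hΩbd : Bornology.IsBounded Ω) (hu : LipschitzOnWith L u Ω)
    (hu0 : ∀ x ∈ Ω, 0 ≤ u x) (hΩne : Ω.Nonempty) {s1 s2 : ℝ} (h0 : 0 ≤ s1) (h12 : s1 ≤ s2)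
    (hs : s2 < (volume Ω).toReal) : rearr Ω u s2 ≤ rearr Ω u s1 := by
  apply csInf_le_csInf
  · exact ⟨0, fun t ht => rearr_set_pos hu0 hs ht⟩
  · exact rearr_set_nonempty hΩbd hu hΩne h0
  · intro t ht
    exact le_trans ht h12

lemma distrib_rearr_le (hΩbd : Bornology.IsBounded Ω) (hu : LipschitzOnWith L u Ω)
    (hu0 : ∀ x ∈ Ω, 0 ≤ u x) (hΩne : Ω.Nonempty) {s : ℝ} (h0 : 0 ≤ s)
    (hs : s < (volume Ω).toReal) : distrib Ω u (rearr Ω u s) ≤ s := by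
  set T := rearr Ω u s with hT
  have hSne := rearr_set_nonempty hΩbd hu hΩne (s := s) h0
  have hstep : ∀ k : ℕ, distrib Ω u (T + dlt k) ≤ s := by
    intro k
    obtain ⟨a, ha, halt⟩ := Real.lt_sInf_add_pos hSne (dlt_pos k)
    exact le_trans (distrib_antitone hΩbd halt.le) ha
  have hcont := distrib_right_continuous (u := u) hΩbd T
  have hseq : Tendsto (fun k => T + dlt k) atTop (𝓝[Ici T] T) := by
    apply tendsto_nhdsWithin_of_tendsto_nhds_of_eventually_within
    · have h1 : Tendsto dlt atTop (𝓝 0) := dlt_tendsto.mono_right nhdsWithin_le_nhds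
      simpa using tendsto_const_nhds.add h1
    · exact Eventually.of_forall fun k => by
        simp only [mem_Ici, le_add_iff_nonneg_right]
        exact (dlt_pos k).le
  have := hcont.tendsto.comp hseq
  exact le_of_tendsto this (Eventually.of_forall hstep)

lemma lt_distrib_of_lt_rearr (hΩbd : Bornology.IsBounded Ω) (hu0 : ∀ x ∈ Ω, 0 ≤ u x)
    {s t : ℝ} (hs : s < (volume Ω).toReal) (ht : t < rearr Ω u s) : s < distrib Ω u t := by
  by_contra hle
  push_neg at hle
  have : rearr Ω u s ≤ t :=
    csInf_le ⟨0, fun a ha => rearr_set_pos hu0 hs ha⟩ hle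
  linarith

end PartG
section Core
variable {n : ℕ} {Ω : Set (EuclideanSpace ℝ (Fin n))} {u : EuclideanSpace ℝ (Fin n) → ℝ}
  {L : NNReal}

set_option maxHeartbeats 1600000 in
lemma core_bound (hn : 2 ≤ n) (hΩo : IsOpen Ω) (hΩbd : Bornology.IsBounded Ω)
    (hu : LipschitzOnWith L u Ω) (hL : 0 < (L : ℝ)) (hu0 : ∀ x ∈ Ω, 0 ≤ u x)
    {γ : ℝ} (hγ : 0 < γ)
    (hiso : ∀ t : ℝ, 0 ≤ t →
      γ * (distrib Ω u t) ^ ((1 : ℝ) - 1 / n) ≤ relPerimeter Ω {x ∈ Ω | t < u x})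
    (hΩne : Ω.Nonempty) {s1 s2 : ℝ} (h0 : 0 ≤ s1) (h12 : s1 ≤ s2)
    (hvol : s2 < (volume Ω).toReal) :
    rearr Ω u s1 - rearr Ω u s2 ≤ ((L : ℝ) * n / γ) * (s2 ^ ((1:ℝ)/n) - s1 ^ ((1:ℝ)/n)) := by
  have hnne : n ≠ 0 := by omega
  have hnpos : (0:ℝ) < n := by exact_mod_cast Nat.pos_of_ne_zero hnne
  have hvol1 : s1 < (volume Ω).toReal := lt_of_le_of_lt h12 hvol
  have hexpos : (0:ℝ) < 1/n := by positivity
  set t1 := rearr Ω u s1 with ht1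
  set t2 := rearr Ω u s2 with ht2
  have ht21 : t2 ≤ t1 := rearr_antitone hΩbd hu hu0 hΩne h0 h12 hvol
  have ht20 : 0 ≤ t2 := rearr_nonneg hu0 hvol
  have hrpm : s1 ^ ((1:ℝ)/n) ≤ s2 ^ ((1:ℝ)/n) := Real.rpow_le_rpow h0 h12 hexpos.le
  have hKpos : (0:ℝ) < (L:ℝ) * n / γ := by positivity
  rcases eq_or_lt_of_le ht21 with heq | hlt
  · rw [← heq, sub_self]
    exact mul_nonneg hKpos.le (sub_nonneg.2 hrpm)
  -- main case
  set c := γ / ((L:ℝ) * n) with hc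
  have hcpos : 0 < c := by positivity
  set ν : ℝ → ℝ := fun τ => (distrib Ω u τ) ^ ((1:ℝ)/n) with hν
  have hνanti : Antitone ν := fun a b hab =>
    Real.rpow_le_rpow (distrib_nonneg _) (distrib_antitone hΩbd hab) hexpos.le
  have hμfun : ∀ τ, (ν τ) ^ (n:ℕ) = distrib Ω u τ := by
    intro τ
    rw [hν, one_div]
    exact Real.rpow_inv_natCast_pow (distrib_nonneg _) hnne
  set S : StieltjesFunction ℝ :=
    { toFun := fun τ => -ν τ
      mono' := fun a b hab => neg_le_neg (hνanti hab)
      right_continuous' := by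
        intro x
        apply ContinuousWithinAt.neg
        have h1 : ContinuousAt (fun y : ℝ => y ^ ((1:ℝ)/n)) (distrib Ω u x) :=
          Real.continuousAt_rpow_const _ _ (Or.inr hexpos.le)
        exact h1.comp_continuousWithinAt (distrib_right_continuous hΩbd x) } with hS
  have hae : ∀ᵐ τ, τ ∈ Ioo t2 t1 → ENNReal.ofReal c ≤ S.measure.rnDeriv volume τ := by
    filter_upwards [S.ae_hasDerivAt] with τ hτd hτmem
    rcases eq_or_ne (S.measure.rnDeriv volume τ) ⊤ with htop | hne'
    · rw [htop]; exact le_top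
    apply ENNReal.ofReal_le_of_le_toReal
    set d := (S.measure.rnDeriv volume τ).toReal with hd'
    have hd : HasDerivAt (fun τ' => -ν τ') d τ := hτd
    have hν' : HasDerivAt ν (-d) τ := by
      have := hd.neg
      simpa [Pi.neg_def] using this
    have hμpos : 0 < distrib Ω u τ :=
      lt_of_le_of_lt h0 (lt_distrib_of_lt_rearr hΩbd hu0 hvol1 hτmem.2)
    have hμd : HasDerivAt (distrib Ω u) ((n:ℝ) * (ν τ) ^ (n-1) * (-d)) τ := by
      have h2 := hν'.pow n
      have h3 : (ν ^ (n:ℕ)) = distrib Ω u := funext hμfun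
      rwa [h3] at h2
    have hEne : {x ∈ Ω | τ < u x}.Nonempty := by
      by_contra hemp
      rw [not_nonempty_iff_eq_empty] at hemp
      have : distrib Ω u τ = 0 := by rw [distrib, hemp]; simp
      linarith
    have hτ0 : 0 ≤ τ := le_trans ht20 hτmem.1.le
    have hP := le_trans (hiso τ hτ0)
      (perimeter_bound hΩo hΩbd hu hL hEne hμd)
    have hνpos : 0 < ν τ := Real.rpow_pos_of_pos hμpos _
    have hXpos : 0 < (ν τ) ^ (n-1) := pow_pos hνpos _
    have hexp : (distrib Ω u τ) ^ ((1:ℝ) - 1/n) = (ν τ) ^ (n-1) := by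
      rw [hν, ← Real.rpow_natCast ((distrib Ω u τ) ^ ((1:ℝ)/n)) (n-1),
        ← Real.rpow_mul (distrib_nonneg _)]
      congr 1
      have : ((n:ℕ) - 1 : ℕ) = ((n:ℝ) - 1 : ℝ) := by
        push_cast [Nat.cast_sub (by omega : 1 ≤ n)]
        ring
      rw [this]
      field_simp
    rw [hexp] at hP
    have hγle : γ * (ν τ) ^ (n-1) ≤ ((L:ℝ) * n * d) * (ν τ) ^ (n-1) := by
      calc γ * (ν τ) ^ (n-1) ≤ -(L:ℝ) * ((n:ℝ) * (ν τ) ^ (n-1) * (-d)) := hP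
        _ = ((L:ℝ) * n * d) * (ν τ) ^ (n-1) := by ring
    have hγle2 : γ ≤ (L:ℝ) * n * d := (mul_le_mul_iff_left₀ hXpos).1 hγle
    rw [hc]
    rw [div_le_iff₀ (by positivity)]
    linarith
  -- the integrated inequality
  have hstep : ∀ t1', t1' ∈ Ioo t2 t1 → c * (t1' - t2) ≤ ν t2 - ν t1' := by
    intro t1' hmem
    have hsub : Ioc t2 t1' ⊆ Ioo t2 t1 := fun τ hτ => ⟨hτ.1, lt_of_le_of_lt hτ.2 hmem.2⟩
    have hmeas : MeasurableSet (Ioc t2 t1') := measurableSet_Ioc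
    have h1 : ENNReal.ofReal c * volume (Ioc t2 t1') ≤
        ∫⁻ τ in Ioc t2 t1', S.measure.rnDeriv volume τ := by
      calc ENNReal.ofReal c * volume (Ioc t2 t1')
          = ∫⁻ _ in Ioc t2 t1', ENNReal.ofReal c := (setLIntegral_const _ _).symm
        _ ≤ ∫⁻ τ in Ioc t2 t1', S.measure.rnDeriv volume τ := by
            apply lintegral_mono_ae
            rw [ae_restrict_iff' hmeas]
            filter_upwards [hae] with τ hτ hτmem
            exact hτ (hsub hτmem)
    have h2 : (∫⁻ τ in Ioc t2 t1', S.measure.rnDeriv volume τ) ≤ S.measure (Ioc t2 t1') := by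
      calc (∫⁻ τ in Ioc t2 t1', S.measure.rnDeriv volume τ)
          = (volume.withDensity (S.measure.rnDeriv volume)) (Ioc t2 t1') :=
            (withDensity_apply _ hmeas).symm
        _ ≤ S.measure (Ioc t2 t1') :=
            Measure.le_iff'.1 (Measure.withDensity_rnDeriv_le S.measure volume) _
    have h3 : S.measure (Ioc t2 t1') = ENNReal.ofReal (ν t2 - ν t1') := by
      rw [S.measure_Ioc]
      congr 1
      show -ν t1' - -ν t2 = ν t2 - ν t1'
      ring
    have h4 : ENNReal.ofReal c * ENNReal.ofReal (t1' - t2) ≤ ENNReal.ofReal (ν t2 - ν t1') := by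
      rw [← Real.volume_Ioc]
      exact le_trans (le_trans h1 h2) (le_of_eq h3)
    rw [← ENNReal.ofReal_mul hcpos.le] at h4
    have h5 : 0 ≤ ν t2 - ν t1' := sub_nonneg.2 (hνanti hmem.1.le)
    exact (ENNReal.ofReal_le_ofReal_iff h5).1 h4
  have hb1 : ν t2 ≤ s2 ^ ((1:ℝ)/n) :=
    Real.rpow_le_rpow (distrib_nonneg _)
      (distrib_rearr_le hΩbd hu hu0 hΩne (le_trans h0 h12) hvol) hexpos.le
  have hfin : ∀ t1', t1' ∈ Ioo t2 t1 →
      c * (t1' - t2) ≤ s2 ^ ((1:ℝ)/n) - s1 ^ ((1:ℝ)/n) := by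
    intro t1' hmem
    have hb2 : s1 ^ ((1:ℝ)/n) ≤ ν t1' :=
      Real.rpow_le_rpow h0 (lt_distrib_of_lt_rearr hΩbd hu0 hvol1 hmem.2).le hexpos.le
    linarith [hstep t1' hmem]
  have hdlt0 : Tendsto dlt atTop (𝓝 0) := dlt_tendsto.mono_right nhdsWithin_le_nhds
  have hseq : Tendsto (fun k => c * ((t1 - dlt k) - t2)) atTop (𝓝 (c * (t1 - t2))) := by
    have h1 : Tendsto (fun k => (t1 - dlt k) - t2) atTop (𝓝 ((t1 - 0) - t2)) :=
      (tendsto_const_nhds.sub hdlt0).sub tendsto_const_nhds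
    rw [sub_zero] at h1
    exact h1.const_mul _
  have hev : ∀ᶠ k in atTop, c * ((t1 - dlt k) - t2) ≤ s2 ^ ((1:ℝ)/n) - s1 ^ ((1:ℝ)/n) := by
    filter_upwards [hdlt0.eventually_lt_const (sub_pos.2 hlt)] with k hk
    exact hfin _ ⟨by linarith [dlt_pos k], by linarith [dlt_pos k]⟩
  have hD : c * (t1 - t2) ≤ s2 ^ ((1:ℝ)/n) - s1 ^ ((1:ℝ)/n) := le_of_tendsto hseq hev
  have hid : ((L:ℝ) * n / γ) * c = 1 := by
    rw [hc]; field_simp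
  calc t1 - t2 = ((L:ℝ) * n / γ) * (c * (t1 - t2)) := by
        rw [← mul_assoc, hid, one_mul]
    _ ≤ ((L:ℝ) * n / γ) * (s2 ^ ((1:ℝ)/n) - s1 ^ ((1:ℝ)/n)) :=
        mul_le_mul_of_nonneg_left hD hKpos.le

end Core
section Final

lemma unitBallVol_pos {n : ℕ} (hn : 1 ≤ n) : 0 < unitBallVol n := by
  apply ENNReal.toReal_pos
  · exact (measure_ball_pos volume (0 : EuclideanSpace ℝ (Fin n)) one_pos).ne'
  · exact (Metric.isBounded_ball.measure_lt_top).ne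

theorem schwarz_lipschitz_of_isoperimetric {n : ℕ} (hn : 2 ≤ n)
    (Ω : Set (EuclideanSpace ℝ (Fin n))) (u : EuclideanSpace ℝ (Fin n) → ℝ)
    (hΩo : IsOpen Ω) (hΩbd : Bornology.IsBounded Ω)
    (L : NNReal) (hL : 0 < (L : ℝ)) (hu : LipschitzOnWith L u Ω)
    (hu0 : ∀ x ∈ Ω, 0 ≤ u x)
    (γ : ℝ) (hγ : 0 < γ)
    (hiso : ∀ t : ℝ, 0 ≤ t →
      γ * (distrib Ω u t) ^ ((1 : ℝ) - 1 / n) ≤ relPerimeter Ω {x ∈ Ω | t < u x}) :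
    LipschitzOnWith
      (Real.toNNReal ((L : ℝ) * n * (unitBallVol n) ^ ((1 : ℝ) / n) / γ))
      (schwarz Ω u) (ballSameVol Ω) := by
  have hnne : n ≠ 0 := by omega
  have hnpos : (0:ℝ) < n := by exact_mod_cast Nat.pos_of_ne_zero hnne
  have hexpos : (0:ℝ) < 1/n := by positivity
  have hcn : 0 < unitBallVol n := unitBallVol_pos (by omega)
  by_cases hΩe : Ω = ∅
  · have hball : ballSameVol Ω = ∅ := by
      unfold ballSameVol
      rw [hΩe, measure_empty]
      simp only [ENNReal.toReal_zero, zero_div]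
      rw [Real.zero_rpow hexpos.ne']
      exact Metric.ball_zero
    rw [hball]
    exact lipschitzOnWith_empty _ _
  have hΩne : Ω.Nonempty := Set.nonempty_iff_ne_empty.2 hΩe
  have hVfin : volume Ω < ⊤ := hΩbd.measure_lt_top
  have hVpos : 0 < (volume Ω).toReal :=
    ENNReal.toReal_pos (hΩo.measure_pos volume hΩne).ne' hVfin.ne
  set K := (L : ℝ) * n * (unitBallVol n) ^ ((1:ℝ)/n) / γ with hK
  have hK0 : 0 ≤ K := by positivity
  -- the one-sided estimate
  have main : ∀ x y : EuclideanSpace ℝ (Fin n), x ∈ ballSameVol Ω → y ∈ ballSameVol Ω →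
      ‖x‖ ≤ ‖y‖ → schwarz Ω u y ≤ schwarz Ω u x ∧
        schwarz Ω u x - schwarz Ω u y ≤ K * (‖y‖ - ‖x‖) := by
    intro x y hx hy hxy
    set s1 := unitBallVol n * ‖x‖ ^ n with hs1
    set s2 := unitBallVol n * ‖y‖ ^ n with hs2
    have h0 : 0 ≤ s1 := by positivity
    have h12 : s1 ≤ s2 := by
      apply mul_le_mul_of_nonneg_left _ hcn.le
      exact pow_le_pow_left₀ (norm_nonneg x) hxy n
    have hyball : ‖y‖ < ((volume Ω).toReal / unitBallVol n) ^ ((1:ℝ)/n) := by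
      rw [ballSameVol, mem_ball_zero_iff] at hy
      exact hy
    have hs2vol : s2 < (volume Ω).toReal := by
      have h1 : ‖y‖ ^ n < (((volume Ω).toReal / unitBallVol n) ^ ((1:ℝ)/n)) ^ n :=
        pow_lt_pow_left₀ hyball (norm_nonneg y) hnne
      have h2 : (((volume Ω).toReal / unitBallVol n) ^ ((1:ℝ)/n)) ^ n
          = (volume Ω).toReal / unitBallVol n := by
        rw [one_div]
        exact Real.rpow_inv_natCast_pow (by positivity) hnne
      rw [h2] at h1
      calc s2 < unitBallVol n * ((volume Ω).toReal / unitBallVol n) :=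
            mul_lt_mul_of_pos_left h1 hcn
        _ = (volume Ω).toReal := by field_simp
    have hcore := core_bound hn hΩo hΩbd hu hL hu0 hγ hiso hΩne h0 h12 hs2vol
    have hrw : ∀ z : EuclideanSpace ℝ (Fin n),
        (unitBallVol n * ‖z‖ ^ n) ^ ((1:ℝ)/n) = (unitBallVol n) ^ ((1:ℝ)/n) * ‖z‖ := by
      intro z
      rw [Real.mul_rpow hcn.le (by positivity)]
      congr 1
      rw [one_div]
      exact Real.pow_rpow_inv_natCast (norm_nonneg z) hnne
    constructor
    · exact rearr_antitone hΩbd hu hu0 hΩne h0 h12 hs2vol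
    · calc schwarz Ω u x - schwarz Ω u y = rearr Ω u s1 - rearr Ω u s2 := rfl
        _ ≤ ((L:ℝ) * n / γ) * (s2 ^ ((1:ℝ)/n) - s1 ^ ((1:ℝ)/n)) := hcore
        _ = K * (‖y‖ - ‖x‖) := by
            rw [hrw x, hrw y, hK]
            ring
  apply LipschitzOnWith.of_dist_le_mul
  intro x hx y hy
  rw [Real.coe_toNNReal _ hK0, Real.dist_eq]
  rcases le_total ‖x‖ ‖y‖ with hc | hc
  · obtain ⟨h1, h2⟩ := main x y hx hy hc
    rw [abs_of_nonneg (by linarith : 0 ≤ schwarz Ω u x - schwarz Ω u y)]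
    calc schwarz Ω u x - schwarz Ω u y ≤ K * (‖y‖ - ‖x‖) := h2
      _ ≤ K * dist x y := by
          apply mul_le_mul_of_nonneg_left _ hK0
          rw [dist_eq_norm, norm_sub_rev]
          exact norm_sub_norm_le y x
  · obtain ⟨h1, h2⟩ := main y x hy hx hc
    rw [abs_of_nonpos (by linarith : schwarz Ω u x - schwarz Ω u y ≤ 0), neg_sub]
    calc schwarz Ω u y - schwarz Ω u x ≤ K * (‖x‖ - ‖y‖) := h2
      _ ≤ K * dist x y := by
          apply mul_le_mul_of_nonneg_left _ hK0
          rw [dist_eq_norm]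
          exact norm_sub_norm_le x y

end Final
end
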